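/- Let (X, ω, J, L) be a COMPACT prequantizable Kähler manifold with a Lie group G acting on (X, L) preserving the Kähler structure, the Hermitian metric and the moment map μ. Then for every ξ ∈ 𝔤 and every k > 0, the Berezin-Toeplitz operator of the level-k quantum moment map equals the infinitesimal action on holomorphic sections: T_{k·μ_k(ξ), k} = β_k(ξ) = ∇^{⊗k}_{V_ξ} − 2π√-1·k·m_{μ(ξ)} as operators on ℋ_k = H⁰_∂̄(X, L^{⊗k}); here k·μ_k(ξ) = (2π/√-1)·k·(μ(ξ) − (1/4πk)·Δμ(ξ)) up to the normalization −2πk√-1·(μ(ξ) − (1/4πk)Δμ(ξ)). That is, the diagram 𝔤 → C^∞(X) → gl(ℋ_k) with the Toeplitz map T commutes with β_k. -/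
import Mathlib


/-!
# On compact Kähler manifolds the Toeplitz diagram commutes

Abstract formalization for a **compact** prequantizable Kähler manifold `(X, ω, J, L)`
acted on by a Lie group `G` (Lie algebra `𝔤`) preserving the Kähler structure, the
Hermitian metric and the moment map `μ`:

* `A` = algebra of complex-valued smooth functions `C^∞(X)`, `Δ` = the Kähler Laplacian.
* `S` = sections of `L^{⊗k}`, `H` = `ℋ_k = H⁰_∂̄(X, L^{⊗k})` the holomorphic sections,
  `incl : H → S` the inclusion, `Pk : S → H` the orthogonal `L²`-projection `Π_k`
  (`Pk ∘ incl = id`); the level-`k` Berezin–Toeplitz operator of `f` is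
  `T f = Π_k ∘ m_f ∘ incl`.
* `covDerS V = ∇^{⊗k}_V`, `multS a = m_a`; `Ham h = V_h` is the Hamiltonian vector
  field of `h` and `V_ξ = V_{μ(ξ)}` (`hHam`).
* `β_k(ξ)` is the infinitesimal action on `ℋ_k`, the restriction of
  `∇^{⊗k}_{V_ξ} − 2π√-1·k·m_{μ(ξ)}`.
* Compactness of `X` enters through Tuynman's formula
  `Π_k ∘ ∇^{⊗k}_{V_f} = (√-1/2)·Π_k ∘ m_{Δf}` on holomorphic sections (`hTuynman`),
  valid on compact Kähler manifolds.

**Statement.** For every `ξ ∈ 𝔤`, `T_{k·μ_k(ξ),k} = β_k(ξ)` as operators on `ℋ_k`,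
where `k·μ_k(ξ) = −2πk√-1·(μ(ξ) − (1/4πk)·Δμ(ξ))`; i.e. the diagram
`𝔤 → C^∞(X) → gl(ℋ_k)` formed by `k·μ_k`, the Toeplitz map `T` and `β_k` commutes.
-/

theorem toeplitz_of_quantum_moment_map_eq_infinitesimal_action
    (A : Type*) [CommRing A] [Algebra ℂ A]
    (𝔤 : Type*) [LieRing 𝔤] [LieAlgebra ℝ 𝔤]
    (Vec : Type*)
    (Vfield : 𝔤 → Vec)
    (μ : 𝔤 → A)
    (Δ : A → A)
    -- Hamiltonian vector fields; `V_ξ` is the Hamiltonian vector field of `μ(ξ)`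
    (Ham : A → Vec)
    (hHam : ∀ ξ, Vfield ξ = Ham (μ ξ))
    (k : ℕ) (hk : 0 < k)
    -- sections of `L^{⊗k}`, holomorphic sections, inclusion and orthogonal projection
    (S : Type*) [AddCommGroup S] [Module ℂ S]
    (H : Type*) [AddCommGroup H] [Module ℂ H]
    (incl : H →ₗ[ℂ] S)
    (Pk : S →ₗ[ℂ] H)
    (hproj : Pk ∘ₗ incl = LinearMap.id)
    (covDerS : Vec → S →ₗ[ℂ] S)
    (multS : A → S →ₗ[ℂ] S)
    (hmult_add : ∀ a b : A, multS (a + b) = multS a + multS b)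
    (hmult_smul : ∀ (c : ℂ) (a : A), multS (c • a) = c • multS a)
    -- `β_k(ξ)`: the restriction of `∇^{⊗k}_{V_ξ} − 2π√-1·k·m_{μ(ξ)}` to `ℋ_k`
    (BK : 𝔤 → H →ₗ[ℂ] H)
    (hBK : ∀ ξ, incl ∘ₗ BK ξ
      = (covDerS (Vfield ξ)
          - (2 * (Real.pi : ℂ) * Complex.I * (k : ℂ)) • multS (μ ξ)) ∘ₗ incl)
    -- Tuynman's formula (valid since `X` is compact):
    -- `Π_k ∘ ∇^{⊗k}_{V_f} = (√-1/2)·Π_k ∘ m_{Δf}` on holomorphic sections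
    (hTuynman : ∀ f : A,
      Pk ∘ₗ covDerS (Ham f) ∘ₗ incl
        = (Complex.I / 2) • (Pk ∘ₗ multS (Δ f) ∘ₗ incl)) :
    -- `T_{k·μ_k(ξ),k} = β_k(ξ)`, where
    -- `k·μ_k(ξ) = −2πk√-1·(μ(ξ) − (1/4πk)·Δμ(ξ))`
    ∀ ξ : 𝔤,
      Pk ∘ₗ multS ((-(2 * (Real.pi : ℂ) * (k : ℂ) * Complex.I)) •
          (μ ξ - (4 * (Real.pi : ℂ) * (k : ℂ))⁻¹ • Δ (μ ξ))) ∘ₗ incl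
        = BK ξ := by
  intro ξ
  have hBK' : BK ξ = Pk ∘ₗ (incl ∘ₗ BK ξ) := by
    rw [← LinearMap.comp_assoc, hproj, LinearMap.id_comp]
  rw [hBK' , hBK, hHam]
  have hsub : ∀ a b : A, multS (a - b) = multS a - multS b := by
    intro a b
    have := hmult_add (a - b) b
    simp only [sub_add_cancel] at this
    rw [this]; abel
  rw [hmult_smul, hsub, hmult_smul]
  have hπ : (Real.pi : ℂ) ≠ 0 := Complex.ofReal_ne_zero.mpr Real.pi_ne_zero
  have hkc : (k : ℂ) ≠ 0 := Nat.cast_ne_zero.mpr hk.ne'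
  have hcoef : (-(2 * (Real.pi : ℂ) * (k : ℂ) * Complex.I)) *
      (4 * (Real.pi : ℂ) * (k : ℂ))⁻¹ = -(Complex.I / 2) := by
    field_simp
    ring
  ext v
  simp only [LinearMap.comp_apply, LinearMap.sub_apply, LinearMap.smul_apply,
    LinearMap.map_sub, LinearMap.map_smul, smul_sub, smul_smul, hcoef]
  have hT := congrArg (fun (L : H →ₗ[ℂ] H) => L v) (hTuynman (μ ξ))
  simp only [LinearMap.comp_apply, LinearMap.smul_apply] at hT
  rw [hT]
  have : (-(2 * (Real.pi : ℂ) * (k : ℂ) * Complex.I))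
      = -(2 * (Real.pi : ℂ) * Complex.I * (k : ℂ)) := by ring
  rw [this]
  simp [neg_smul, sub_eq_add_neg, add_comm]
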